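/- arXiv:1311.0914 — 3 statements merged into one kernel-verified Lean document; each statement's English description precedes it below -/
import Mathlib

section
/- For the quadratic f(α) = (1/2)αᵀQα − eᵀα on the box [0,C]ⁿ with Q symmetric, if α* is a minimizer and ᾱ is the concatenation of block-subproblem minimizers (equivalently, a minimizer of f̄ as in the block-diagonal approximation Q̄), then 0 ≤ f(ᾱ) − f(α*) ≤ (1/2)C²·D(π), where D(π) = Σ_{i,j : π(i) ≠ π(j)} |Q_{ij}|. -/
open Matrix BigOperators

/-- if α* minimizes f over the box and ᾱ minimizes the block-diagonal
objective f̄ over the box, then 0 ≤ f(ᾱ) − f(α*) ≤ (1/2)·C²·D(π). -/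
theorem stmt1 (n k : ℕ) (Q : Matrix (Fin n) (Fin n) ℝ) (hQ : Q.IsSymm)
    (C : ℝ) (hC : 0 < C) (π : Fin n → Fin k)
    (Qbar : Matrix (Fin n) (Fin n) ℝ)
    (hQbar : ∀ i j, Qbar i j = if π i = π j then Q i j else 0)
    (box : Set (Fin n → ℝ))
    (hbox : box = {α | ∀ i, 0 ≤ α i ∧ α i ≤ C})
    (f fbar : (Fin n → ℝ) → ℝ)
    (hf : ∀ α, f α = (1/2) * (α ⬝ᵥ Q.mulVec α) - ∑ i, α i)
    (hfbar : ∀ α, fbar α = (1/2) * (α ⬝ᵥ Qbar.mulVec α) - ∑ i, α i)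
    (D : ℝ)
    (hD : D = ∑ i, ∑ j, (if π i ≠ π j then |Q i j| else 0))
    (αstar : Fin n → ℝ) (hαstar : αstar ∈ box)
    (hmin : ∀ β ∈ box, f αstar ≤ f β)
    (αbar : Fin n → ℝ) (hαbar : αbar ∈ box)
    (hminbar : ∀ β ∈ box, fbar αbar ≤ fbar β) :
    0 ≤ f αbar - f αstar ∧ f αbar - f αstar ≤ (1/2) * C^2 * D := by
  have h1 : 0 ≤ f αbar - f αstar := by
    have := hmin αbar hαbar; linarith
  refine ⟨h1, ?_⟩
  have h2 : fbar αbar ≤ fbar αstar := hminbar αstar hαstar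
  have hbarbox : ∀ i, 0 ≤ αbar i ∧ αbar i ≤ C := by
    rw [hbox] at hαbar; exact hαbar
  have hstarbox : ∀ i, 0 ≤ αstar i ∧ αstar i ≤ C := by
    rw [hbox] at hαstar; exact hαstar
  have hexp : ∀ α : Fin n → ℝ, f α - fbar α
      = (1/2) * ∑ i, ∑ j, (if π i ≠ π j then α i * Q i j * α j else 0) := by
    intro α
    rw [hf, hfbar]
    have : α ⬝ᵥ Q.mulVec α - α ⬝ᵥ Qbar.mulVec α
        = ∑ i, ∑ j, (if π i ≠ π j then α i * Q i j * α j else 0) := by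
      simp only [dotProduct, mulVec, Finset.mul_sum, ← Finset.sum_sub_distrib]
      refine Finset.sum_congr rfl fun i _ => Finset.sum_congr rfl fun j _ => ?_
      rw [hQbar]
      by_cases h : π i = π j <;> simp [h] <;> ring
    linarith
  have key : f αbar - f αstar
      ≤ (1/2) * ∑ i, ∑ j, (if π i ≠ π j then αbar i * Q i j * αbar j else 0)
        - (1/2) * ∑ i, ∑ j, (if π i ≠ π j then αstar i * Q i j * αstar j else 0) := by
    have e1 := hexp αbar
    have e2 := hexp αstar
    linarith
  have hbound : ∑ i, ∑ j, (if π i ≠ π j then αbar i * Q i j * αbar j else 0)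
      - ∑ i, ∑ j, (if π i ≠ π j then αstar i * Q i j * αstar j else 0)
      ≤ ∑ i, ∑ j, C^2 * (if π i ≠ π j then |Q i j| else 0) := by
    rw [← Finset.sum_sub_distrib]
    refine Finset.sum_le_sum fun i _ => ?_
    rw [← Finset.sum_sub_distrib]
    refine Finset.sum_le_sum fun j _ => ?_
    by_cases h : π i = π j
    · simp [h]
    · simp only [ne_eq, h, not_false_eq_true, if_true]
      obtain ⟨hb1, hb2⟩ := hbarbox i
      obtain ⟨hb3, hb4⟩ := hbarbox j
      obtain ⟨hs1, hs2⟩ := hstarbox i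
      obtain ⟨hs3, hs4⟩ := hstarbox j
      have habs : |αbar i * αbar j - αstar i * αstar j| ≤ C^2 := by
        rw [abs_le]
        constructor <;> nlinarith
      calc αbar i * Q i j * αbar j - αstar i * Q i j * αstar j
          = (αbar i * αbar j - αstar i * αstar j) * Q i j := by ring
        _ ≤ |(αbar i * αbar j - αstar i * αstar j) * Q i j| := le_abs_self _
        _ = |αbar i * αbar j - αstar i * αstar j| * |Q i j| := abs_mul _ _
        _ ≤ C^2 * |Q i j| := by
            apply mul_le_mul_of_nonneg_right habs (abs_nonneg _)
  have hsum : ∑ i, ∑ j, C^2 * (if π i ≠ π j then |Q i j| else 0) = C^2 * D := by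
    rw [hD, Finset.mul_sum]
    exact Finset.sum_congr rfl fun i _ => (Finset.mul_sum _ _ _).symm
  rw [hsum] at hbound
  linarith
end

section
/- With Q symmetric positive definite (smallest eigenvalue σ_n > 0), Q̄ the block-diagonal part of Q w.r.t. a partition π, α* the minimizer of f(α) = (1/2)αᵀQα − eᵀα over [0,C]ⁿ, and ᾱ the minimizer of the block-diagonal problem, D(π) = Σ_{π(i)≠π(j)} |Q_{ij}| and K_max = max_i Q_{ii}: for any index i with ᾱ_i = 0 and (Q̄ᾱ)_i − 1 > C·D(π)·(1 + √n·K_max/√(σ_n·D(π))), it follows that α*_i = 0. -/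
set_option maxHeartbeats 1000000


open Matrix BigOperators

lemma symm_dot {n : ℕ} (A : Matrix (Fin n) (Fin n) ℝ) (hA : A.IsSymm) (v w : Fin n → ℝ) :
    v ⬝ᵥ A.mulVec w = w ⬝ᵥ A.mulVec v := by
  rw [Matrix.dotProduct_mulVec, ← Matrix.mulVec_transpose, hA, dotProduct_comm]

lemma expand_quad {n : ℕ} (A : Matrix (Fin n) (Fin n) ℝ) (hA : A.IsSymm) (α d : Fin n → ℝ) (t : ℝ) :
    (α + t • d) ⬝ᵥ A.mulVec (α + t • d)
      = α ⬝ᵥ A.mulVec α + 2*t*(d ⬝ᵥ A.mulVec α) + t^2 * (d ⬝ᵥ A.mulVec d) := by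
  rw [Matrix.mulVec_add, Matrix.mulVec_smul]
  rw [add_dotProduct, smul_dotProduct, dotProduct_add, dotProduct_add,
    dotProduct_smul, dotProduct_smul]
  rw [symm_dot A hA α d]
  simp only [smul_eq_mul]; ring

/-- first-order optimality condition for minimizers of a convex quadratic over a box -/
lemma first_order {n : ℕ} (A : Matrix (Fin n) (Fin n) ℝ) (hA : A.IsSymm)
    (hpsd : ∀ x : Fin n → ℝ, 0 ≤ x ⬝ᵥ A.mulVec x)
    (C : ℝ) (α β : Fin n → ℝ) (hα : ∀ i, 0 ≤ α i ∧ α i ≤ C) (hβ : ∀ i, 0 ≤ β i ∧ β i ≤ C)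
    (hmin : ∀ γ : Fin n → ℝ, (∀ i, 0 ≤ γ i ∧ γ i ≤ C) →
      (1/2)*(α ⬝ᵥ A.mulVec α) - ∑ i, α i ≤ (1/2)*(γ ⬝ᵥ A.mulVec γ) - ∑ i, γ i) :
    0 ≤ (β - α) ⬝ᵥ A.mulVec α - ∑ i, (β i - α i) := by
  set d : Fin n → ℝ := β - α with hd
  set g : ℝ := d ⬝ᵥ A.mulVec α - ∑ i, d i with hg
  by_contra hcon
  push_neg at hcon
  have hgneg : g < 0 := by
    have : ∑ i, d i = ∑ i, (β i - α i) := by simp [hd]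
    rw [hg, this]; exact hcon
  have hs : 0 ≤ d ⬝ᵥ A.mulVec d := hpsd d
  set s : ℝ := d ⬝ᵥ A.mulVec d with hsdef
  set t : ℝ := min 1 ((-g)/(s+1)) with ht
  have hs1 : (0:ℝ) < s + 1 := by linarith
  have ht0 : 0 < t := lt_min one_pos (div_pos (by linarith) hs1)
  have ht1 : t ≤ 1 := min_le_left _ _
  have hts : t * (s+1) ≤ -g := by
    have hmr := min_le_right 1 ((-g)/(s+1))
    calc t * (s+1) ≤ ((-g)/(s+1)) * (s+1) := by nlinarith
    _ = -g := by field_simp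
  have hmem : ∀ i, 0 ≤ (α + t • d) i ∧ (α + t • d) i ≤ C := by
    intro i
    have h1 := (hα i).1; have h2 := (hα i).2
    have h3 := (hβ i).1; have h4 := (hβ i).2
    have : (α + t • d) i = (1 - t) * α i + t * β i := by
      simp [hd, Pi.sub_apply]; ring
    rw [this]
    constructor <;> nlinarith
  have hF := hmin _ hmem
  rw [expand_quad A hA α d t] at hF
  have hsum : ∑ i, (α + t • d) i = (∑ i, α i) + t * ∑ i, d i := by
    simp [Finset.sum_add_distrib, Finset.mul_sum]
  rw [hsum] at hF
  have hkey : 0 ≤ t * g + t^2/2 * s := by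
    have : d ⬝ᵥ A.mulVec α = g + ∑ i, d i := by rw [hg]; ring
    rw [this] at hF; nlinarith
  nlinarith

/-- block diagonal part of a PSD matrix is PSD -/
lemma qbar_psd {n k : ℕ} (Q Qbar : Matrix (Fin n) (Fin n) ℝ) (π : Fin n → Fin k)
    (σ : ℝ) (hσ : 0 < σ)
    (heig : ∀ x : Fin n → ℝ, σ * (∑ i, (x i)^2) ≤ x ⬝ᵥ Q.mulVec x)
    (hQbar : ∀ i j, Qbar i j = if π i = π j then Q i j else 0) :
    ∀ x : Fin n → ℝ, 0 ≤ x ⬝ᵥ Qbar.mulVec x := by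
  intro x
  have key : x ⬝ᵥ Qbar.mulVec x
      = ∑ c : Fin k, (fun i => if π i = c then x i else 0) ⬝ᵥ
          Q.mulVec (fun i => if π i = c then x i else 0) := by
    simp only [dotProduct, mulVec]
    rw [Finset.sum_comm]
    refine Finset.sum_congr rfl fun i _ => ?_
    simp only [ite_mul, zero_mul, Finset.sum_ite_eq, Finset.mem_univ, if_true]
    rw [Finset.mul_sum, Finset.mul_sum]
    refine Finset.sum_congr rfl fun j _ => ?_
    rw [hQbar]
    rcases eq_or_ne (π i) (π j) with h | h
    · simp [h]
    · simp [h, Ne.symm h]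
  rw [key]
  refine Finset.sum_nonneg fun c _ => le_trans ?_ (heig _)
  positivity

lemma offdiag_bound {n : ℕ} (Q : Matrix (Fin n) (Fin n) ℝ) (hQ : Q.IsSymm)
    (σ : ℝ) (hσ : 0 < σ)
    (heig : ∀ x : Fin n → ℝ, σ * (∑ i, (x i)^2) ≤ x ⬝ᵥ Q.mulVec x)
    (Kmax : ℝ) (hKmax : IsGreatest (Set.range fun i => Q i i) Kmax) :
    ∀ i j, |Q i j| ≤ Kmax := by
  have hdiag : ∀ i, σ ≤ Q i i := by
    intro i
    have h := heig (Pi.single i 1 : Fin n → ℝ)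
    have h1 : ∑ l, ((Pi.single i 1 : Fin n → ℝ) l)^2 = 1 := by
      simp [Pi.single_apply, sq, ite_mul, Finset.sum_ite_eq]
    have h2 : (Pi.single i 1 : Fin n → ℝ) ⬝ᵥ Q.mulVec (Pi.single i 1 : Fin n → ℝ) = Q i i := by
      simp [dotProduct, mulVec, Pi.single_apply, ite_mul, mul_ite, Finset.sum_ite_eq]
    rw [h1, h2] at h; linarith
  have hK : ∀ i, Q i i ≤ Kmax := fun i => hKmax.2 ⟨i, rfl⟩
  intro i j
  have hsij : (Pi.single j 1 : Fin n → ℝ) ⬝ᵥ Q.mulVec (Pi.single i 1 : Fin n → ℝ) = Q j i := by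
    simp [dotProduct, mulVec, Pi.single_apply, ite_mul, mul_ite, Finset.sum_ite_eq]
  have hsjj : (Pi.single j 1 : Fin n → ℝ) ⬝ᵥ Q.mulVec (Pi.single j 1 : Fin n → ℝ) = Q j j := by
    simp [dotProduct, mulVec, Pi.single_apply, ite_mul, mul_ite, Finset.sum_ite_eq]
  have hsii : (Pi.single i 1 : Fin n → ℝ) ⬝ᵥ Q.mulVec (Pi.single i 1 : Fin n → ℝ) = Q i i := by
    simp [dotProduct, mulVec, Pi.single_apply, ite_mul, mul_ite, Finset.sum_ite_eq]
  have hsym : Q j i = Q i j := by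
    conv_lhs => rw [← hQ]
    rfl
  have hsq : (Q i j)^2 ≤ Q i i * Q j j := by
    set t : ℝ := -(Q i j)/(Q j j) with ht
    have h := heig ((Pi.single i 1 : Fin n → ℝ) + t • (Pi.single j 1 : Fin n → ℝ))
    rw [expand_quad Q hQ _ _ t, hsij, hsjj, hsii, hsym] at h
    have hpos : 0 ≤ σ * ∑ l, (((Pi.single i 1 : Fin n → ℝ) + t • (Pi.single j 1 : Fin n → ℝ)) l)^2 := by positivity
    have h0 : 0 ≤ Q i i + 2*t*(Q i j) + t^2 * Q j j := by linarith
    have hjj : 0 < Q j j := lt_of_lt_of_le hσ (hdiag j)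
    have hne : Q j j ≠ 0 := ne_of_gt hjj
    have key : Q i i + 2*t*(Q i j) + t^2 * Q j j = (Q i i * Q j j - (Q i j)^2)/Q j j := by
      rw [ht]; field_simp; ring
    rw [key] at h0
    have := (le_div_iff₀ hjj).mp h0
    linarith
  have hKpos : 0 < Kmax := lt_of_lt_of_le hσ (le_trans (hdiag i) (hK i))
  have : (Q i j)^2 ≤ Kmax^2 := by nlinarith [hdiag i, hdiag j, hK i, hK j]
  rcases abs_cases (Q i j) with ⟨h1, _⟩ | ⟨h1, _⟩ <;> nlinarith

/-- early identification of non-support vectors: if ᾱ_i = 0 and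
(Q̄ᾱ)_i − 1 > C·D(π)·(1 + √n·K_max/√(σ·D(π))), then α*_i = 0. -/
theorem stmt5 (n k : ℕ) (hn : 0 < n)
    (Q : Matrix (Fin n) (Fin n) ℝ) (hQ : Q.IsSymm)
    (σ : ℝ) (hσ : 0 < σ)
    (heig : ∀ x : Fin n → ℝ, σ * (∑ i, (x i)^2) ≤ x ⬝ᵥ Q.mulVec x)
    (C : ℝ) (hC : 0 < C) (π : Fin n → Fin k)
    (Qbar : Matrix (Fin n) (Fin n) ℝ)
    (hQbar : ∀ i j, Qbar i j = if π i = π j then Q i j else 0)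
    (box : Set (Fin n → ℝ))
    (hbox : box = {α | ∀ i, 0 ≤ α i ∧ α i ≤ C})
    (f fbar : (Fin n → ℝ) → ℝ)
    (hf : ∀ α, f α = (1/2) * (α ⬝ᵥ Q.mulVec α) - ∑ i, α i)
    (hfbar : ∀ α, fbar α = (1/2) * (α ⬝ᵥ Qbar.mulVec α) - ∑ i, α i)
    (D : ℝ)
    (hD : D = ∑ i, ∑ j, (if π i ≠ π j then |Q i j| else 0))
    (hDpos : 0 < D)
    (Kmax : ℝ) (hKmax : IsGreatest (Set.range fun i => Q i i) Kmax)
    (αstar : Fin n → ℝ) (hαstar : αstar ∈ box)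
    (hmin : ∀ β ∈ box, f αstar ≤ f β)
    (αbar : Fin n → ℝ) (hαbar : αbar ∈ box)
    (hminbar : ∀ β ∈ box, fbar αbar ≤ fbar β) :
    ∀ i : Fin n, αbar i = 0 →
      Qbar.mulVec αbar i - 1 >
        C * D * (1 + Real.sqrt n * Kmax / Real.sqrt (σ * D)) →
      αstar i = 0 := by
  -- basic facts
  have hαs : ∀ i, 0 ≤ αstar i ∧ αstar i ≤ C := by rw [hbox] at hαstar; exact hαstar
  have hαb : ∀ i, 0 ≤ αbar i ∧ αbar i ≤ C := by rw [hbox] at hαbar; exact hαbar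
  have hQbarsym : Qbar.IsSymm := by
    ext i j
    rw [Matrix.transpose_apply, hQbar, hQbar]
    have hsym : Q j i = Q i j := by
      calc Q j i = Qᵀ i j := (Matrix.transpose_apply Q i j).symm
        _ = Q i j := by rw [hQ]
    rcases eq_or_ne (π i) (π j) with h | h
    · rw [if_pos h, if_pos h.symm, hsym]
    · rw [if_neg h, if_neg (Ne.symm h)]
  have hQpsd : ∀ x : Fin n → ℝ, 0 ≤ x ⬝ᵥ Q.mulVec x := fun x =>
    le_trans (by positivity) (heig x)
  have hQbpsd := qbar_psd Q Qbar π σ hσ heig hQbar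
  have hKbd := offdiag_bound Q hQ σ hσ heig Kmax hKmax
  have hKpos : 0 < Kmax := by
    have := hKbd ⟨0, hn⟩ ⟨0, hn⟩
    exact lt_of_lt_of_le (lt_of_lt_of_le hσ (by
      have h := heig (Pi.single ⟨0, hn⟩ 1 : Fin n → ℝ)
      have h1 : ∑ l, ((Pi.single ⟨0, hn⟩ 1 : Fin n → ℝ) l)^2 = 1 := by
        simp [Pi.single_apply, sq, ite_mul, Finset.sum_ite_eq]
      have h2 : (Pi.single ⟨0, hn⟩ 1 : Fin n → ℝ) ⬝ᵥ Q.mulVec (Pi.single ⟨0, hn⟩ 1 : Fin n → ℝ)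
          = Q ⟨0, hn⟩ ⟨0, hn⟩ := by
        simp [dotProduct, mulVec, Pi.single_apply, ite_mul, mul_ite, Finset.sum_ite_eq]
      rw [h1, h2] at h
      calc σ ≤ Q ⟨0, hn⟩ ⟨0, hn⟩ := by linarith
        _ ≤ |Q ⟨0, hn⟩ ⟨0, hn⟩| := le_abs_self _
      )) this
  -- first-order conditions
  have hminQ : ∀ γ : Fin n → ℝ, (∀ i, 0 ≤ γ i ∧ γ i ≤ C) →
      (1/2)*(αstar ⬝ᵥ Q.mulVec αstar) - ∑ i, αstar i ≤ (1/2)*(γ ⬝ᵥ Q.mulVec γ) - ∑ i, γ i := by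
    intro γ hγ
    have := hmin γ (by rw [hbox]; exact hγ)
    rwa [hf, hf] at this
  have hminQb : ∀ γ : Fin n → ℝ, (∀ i, 0 ≤ γ i ∧ γ i ≤ C) →
      (1/2)*(αbar ⬝ᵥ Qbar.mulVec αbar) - ∑ i, αbar i ≤ (1/2)*(γ ⬝ᵥ Qbar.mulVec γ) - ∑ i, γ i := by
    intro γ hγ
    have := hminbar γ (by rw [hbox]; exact hγ)
    rwa [hfbar, hfbar] at this
  set d : Fin n → ℝ := αbar - αstar with hdd
  have hFO1 := first_order Q hQ hQpsd C αstar αbar hαs hαb hminQ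
  have hFO2 := first_order Qbar hQbarsym hQbpsd C αbar αstar hαb hαs hminQb
  -- rewrite FO2
  have hsub : αstar - αbar = -d := by rw [hdd]; abel
  have hFO2' : 0 ≤ -(d ⬝ᵥ Qbar.mulVec αbar) + ∑ i, d i := by
    rw [hsub, neg_dotProduct] at hFO2
    have : ∑ i, (αstar i - αbar i) = -∑ i, d i := by
      rw [← Finset.sum_neg_distrib]
      refine Finset.sum_congr rfl fun i _ => ?_
      simp [hdd]
    rw [this] at hFO2
    linarith
  have hFO1' : 0 ≤ d ⬝ᵥ Q.mulVec αstar - ∑ i, d i := by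
    have : ∑ i, (αbar i - αstar i) = ∑ i, d i := by
      refine Finset.sum_congr rfl fun i _ => by simp [hdd]
    rwa [this] at hFO1
  -- central bound: σ ∑ d² ≤ C² D
  have hdbound : ∀ j, |d j| ≤ C := by
    intro j
    have h1 := (hαs j).1; have h2 := (hαs j).2
    have h3 := (hαb j).1; have h4 := (hαb j).2
    have : d j = αbar j - αstar j := by simp [hdd]
    rw [this]
    rw [abs_le]; constructor <;> linarith
  have hmv : Q.mulVec αbar = Q.mulVec αstar + Q.mulVec d := by
    have hsplit : αstar + d = αbar := by
      funext j; simp [hdd]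
    rw [← hsplit, Matrix.mulVec_add]
  have hdQd_le : d ⬝ᵥ Q.mulVec d ≤ d ⬝ᵥ Q.mulVec αbar - d ⬝ᵥ Qbar.mulVec αbar := by
    have : d ⬝ᵥ Q.mulVec αbar = d ⬝ᵥ Q.mulVec αstar + d ⬝ᵥ Q.mulVec d := by
      rw [hmv, dotProduct_add]
    rw [this]
    linarith
  have hEbound : d ⬝ᵥ Q.mulVec αbar - d ⬝ᵥ Qbar.mulVec αbar ≤ C^2 * D := by
    have heq : d ⬝ᵥ Q.mulVec αbar - d ⬝ᵥ Qbar.mulVec αbar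
        = ∑ i, ∑ j, d i * ((Q i j - Qbar i j) * αbar j) := by
      simp only [dotProduct, mulVec]
      rw [← Finset.sum_sub_distrib]
      refine Finset.sum_congr rfl fun i _ => ?_
      rw [← mul_sub, ← Finset.sum_sub_distrib, Finset.mul_sum]
      refine Finset.sum_congr rfl fun j _ => ?_
      ring
    rw [heq, hD, Finset.mul_sum]
    refine Finset.sum_le_sum fun i _ => ?_
    rw [Finset.mul_sum]
    refine Finset.sum_le_sum fun j _ => ?_
    rw [hQbar]
    rcases eq_or_ne (π i) (π j) with h | h
    · simp [h]
    · simp only [h, if_neg, Ne.symm, ne_eq, not_false_iff, if_true]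
      have h1 := hdbound i
      have h2 := abs_le.mp h1
      have h3 := (hαb j).1; have h4 := (hαb j).2
      have hQa : 0 ≤ |Q i j| := abs_nonneg _
      have : d i * ((Q i j - 0) * αbar j) ≤ |d i| * |Q i j| * |αbar j| := by
        rw [sub_zero]
        calc d i * (Q i j * αbar j) ≤ |d i * (Q i j * αbar j)| := le_abs_self _
          _ = |d i| * |Q i j| * |αbar j| := by rw [abs_mul, abs_mul]; ring
      have habs : |αbar j| ≤ C := abs_le.mpr ⟨by linarith, by linarith⟩
      calc d i * ((Q i j - 0) * αbar j) ≤ |d i| * |Q i j| * |αbar j| := this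
        _ ≤ C * |Q i j| * C := by
            gcongr <;> positivity
        _ = C^2 * |Q i j| := by ring
  have hsigma : σ * ∑ j, (d j)^2 ≤ C^2 * D :=
    le_trans (heig d) (le_trans hdQd_le hEbound)
  have hsumsq : ∑ j, (d j)^2 ≤ C^2 * D / σ := by
    rw [le_div_iff₀ hσ]; linarith
  -- ℓ¹-ℓ² bound
  set L : ℝ := ∑ j, |d j| with hL
  have hL0 : 0 ≤ L := Finset.sum_nonneg fun j _ => abs_nonneg _
  have hCS : L^2 ≤ (n : ℝ) * ∑ j, (d j)^2 := by
    have h2 : ∑ j, (1:ℝ) * |d j| = L := by simp [hL]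
    have h3 : (∑ j : Fin n, ((1:ℝ))^2) = (n:ℝ) := by simp
    calc L^2 = (∑ j, (1:ℝ) * |d j|)^2 := by rw [h2]
      _ ≤ (∑ j : Fin n, ((1:ℝ))^2) * ∑ j, (|d j|)^2 := by
          have := Finset.sum_mul_sq_le_sq_mul_sq Finset.univ (fun _ => (1:ℝ)) (fun j => |d j|)
          simpa using this
      _ = (n : ℝ) * ∑ j, (d j)^2 := by rw [h3]; congr 1; exact Finset.sum_congr rfl fun j _ => sq_abs _
  have hLle : L ≤ Real.sqrt n * Real.sqrt (C^2 * D / σ) := by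
    have h1 : L = Real.sqrt (L^2) := (Real.sqrt_sq hL0).symm
    rw [h1, ← Real.sqrt_mul (by positivity : (0:ℝ) ≤ (n:ℝ))]
    exact Real.sqrt_le_sqrt (le_trans hCS (by
      have : (0:ℝ) ≤ (n:ℝ) := by positivity
      nlinarith [hsumsq]))
  -- sqrt identity
  have hsqrtid : Real.sqrt (C^2 * D / σ) = C * D / Real.sqrt (σ * D) := by
    have hσD : Real.sqrt (σ * D) = Real.sqrt σ * Real.sqrt D := Real.sqrt_mul hσ.le _
    have hDD : Real.sqrt D * Real.sqrt D = D := Real.mul_self_sqrt hDpos.le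
    have h1 : C^2 * D / σ = C^2 * (D / σ) := by ring
    rw [h1, Real.sqrt_mul (sq_nonneg C), Real.sqrt_sq hC.le, Real.sqrt_div hDpos.le, hσD]
    have hsσ : Real.sqrt σ ≠ 0 := ne_of_gt (Real.sqrt_pos.mpr hσ)
    have hsD : Real.sqrt D ≠ 0 := ne_of_gt (Real.sqrt_pos.mpr hDpos)
    field_simp
    linear_combination hDD
  -- now the main estimate at index i
  intro i hi0 hgt
  -- row sums of the off-block part
  have hrow : ∑ j, (if π i ≠ π j then |Q i j| else 0) ≤ D := by
    rw [hD]
    refine Finset.single_le_sum (f := fun i => ∑ j, (if π i ≠ π j then |Q i j| else 0))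
      (fun l _ => Finset.sum_nonneg fun j _ => by positivity) (Finset.mem_univ i)
  have hblock : Q.mulVec αbar i - Qbar.mulVec αbar i ≥ -(C * D) := by
    have heq : Q.mulVec αbar i - Qbar.mulVec αbar i
        = ∑ j, (Q i j - Qbar i j) * αbar j := by
      simp only [mulVec, dotProduct]
      rw [← Finset.sum_sub_distrib]
      exact Finset.sum_congr rfl fun j _ => by ring
    rw [heq, ge_iff_le, neg_le]
    calc -∑ j, (Q i j - Qbar i j) * αbar j
        = ∑ j, -((Q i j - Qbar i j) * αbar j) := by rw [Finset.sum_neg_distrib]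
      _ ≤ ∑ j, C * (if π i ≠ π j then |Q i j| else 0) := by
          refine Finset.sum_le_sum fun j _ => ?_
          rw [hQbar]
          rcases eq_or_ne (π i) (π j) with h | h
          · simp [h]
          · rw [if_neg h, if_pos h, sub_zero]
            have h3 := (hαb j).1; have h4 := (hαb j).2
            have habs : |αbar j| ≤ C := abs_le.mpr ⟨by linarith, by linarith⟩
            calc -(Q i j * αbar j) ≤ |Q i j * αbar j| := neg_le_abs _
              _ = |Q i j| * |αbar j| := abs_mul _ _
              _ ≤ |Q i j| * C := by gcongr <;> positivity
              _ = C * |Q i j| := by ring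
      _ = C * ∑ j, (if π i ≠ π j then |Q i j| else 0) := by rw [Finset.mul_sum]
      _ ≤ C * D := by nlinarith [hrow]
  have hQd : Q.mulVec d i ≤ Kmax * L := by
    have heq : Q.mulVec d i = ∑ j, Q i j * d j := rfl
    rw [heq, hL, Finset.mul_sum]
    refine Finset.sum_le_sum fun j _ => ?_
    have h1 := hKbd i j
    have h2 := abs_nonneg (d j)
    calc Q i j * d j ≤ |Q i j * d j| := le_abs_self _
      _ = |Q i j| * |d j| := abs_mul _ _
      _ ≤ Kmax * |d j| := by nlinarith
  have hmvi : Q.mulVec αstar i = Q.mulVec αbar i - Q.mulVec d i := by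
    rw [hmv]; simp
  have hKL : Kmax * L ≤ C * D * (Real.sqrt n * Kmax / Real.sqrt (σ * D)) := by
    have h1 : Kmax * L ≤ Kmax * (Real.sqrt n * Real.sqrt (C^2 * D / σ)) := by
      nlinarith [hLle, hKpos.le]
    rw [hsqrtid] at h1
    calc Kmax * L ≤ Kmax * (Real.sqrt n * (C * D / Real.sqrt (σ * D))) := h1
      _ = C * D * (Real.sqrt n * Kmax / Real.sqrt (σ * D)) := by ring
  have hgi : 1 < Q.mulVec αstar i := by
    have hbig : Qbar.mulVec αbar i > 1 + C * D + C * D * (Real.sqrt n * Kmax / Real.sqrt (σ * D)) := by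
      have : C * D * (1 + Real.sqrt n * Kmax / Real.sqrt (σ * D))
          = C * D + C * D * (Real.sqrt n * Kmax / Real.sqrt (σ * D)) := by ring
      rw [this] at hgt
      linarith
    rw [hmvi]
    linarith
  -- conclude αstar i = 0 via optimality
  set β : Fin n → ℝ := Function.update αstar i 0 with hβ
  have hβmem : ∀ j, 0 ≤ β j ∧ β j ≤ C := by
    intro j
    rcases eq_or_ne j i with h | h
    · subst h; simp [hβ]
      exact hC.le
    · simp [hβ, Function.update_of_ne h]; exact hαs j
  have hFO3 := first_order Q hQ hQpsd C αstar β hαs hβmem hminQ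
  have hβsub : ∀ j, β j - αstar j = if j = i then -αstar i else 0 := by
    intro j
    rcases eq_or_ne j i with h | h
    · subst h; simp [hβ]
    · simp [hβ, Function.update_of_ne h, h]
  have hc1 : (β - αstar) ⬝ᵥ Q.mulVec αstar = -αstar i * Q.mulVec αstar i := by
    simp only [dotProduct, Pi.sub_apply]
    rw [show (∑ j, (β j - αstar j) * Q.mulVec αstar j)
        = ∑ j, (if j = i then -αstar i * Q.mulVec αstar j else 0) from
      Finset.sum_congr rfl fun j _ => by rw [hβsub j]; split_ifs <;> simp]
    rw [Finset.sum_ite_eq' Finset.univ i (fun j => -αstar i * Q.mulVec αstar j)]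
    simp
  have hc2 : ∑ j, (β j - αstar j) = -αstar i := by
    rw [show (∑ j, (β j - αstar j)) = ∑ j, (if j = i then -αstar i else 0) from
      Finset.sum_congr rfl fun j _ => hβsub j]
    rw [Finset.sum_ite_eq' Finset.univ i (fun _ => -αstar i)]
    simp
  rw [hc1, hc2] at hFO3
  have h0 := (hαs i).1
  nlinarith
end

section
/- Under the same setting (Q symmetric, Q̄ its block-diagonal part w.r.t. partition π, α* the box-constrained minimizer of f, ᾱ the minimizer of the block-diagonal problem over [0,C]ⁿ), define S* = {i : α*_i > 0} and S̄ = {i : ᾱ_i > 0}. Then 0 ≤ f(ᾱ) − f(α*) ≤ (1/2)C²·D_{S*∪S̄}(π), where D_{S*∪S̄}(π) = Σ_{i,j ∈ S*∪S̄, π(i)≠π(j)} |Q_{ij}|. If moreover Q is positive definite with smallest eigenvalue σ_n > 0, then ‖α* − ᾱ‖₂² ≤ C²·D_{S*∪S̄}(π)/σ_n. -/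
open Matrix BigOperators

/-- the refined bound restricted to the union of support-vector sets:
0 ≤ f(ᾱ) − f(α*) ≤ (1/2)C²·D_{S*∪S̄}(π), and under positive definiteness
‖α* − ᾱ‖² ≤ C²·D_{S*∪S̄}(π)/σ. -/
theorem stmt6 (n k : ℕ) (Q : Matrix (Fin n) (Fin n) ℝ) (hQ : Q.IsSymm)
    (C : ℝ) (hC : 0 < C) (π : Fin n → Fin k)
    (Qbar : Matrix (Fin n) (Fin n) ℝ)
    (hQbar : ∀ i j, Qbar i j = if π i = π j then Q i j else 0)
    (box : Set (Fin n → ℝ))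
    (hbox : box = {α | ∀ i, 0 ≤ α i ∧ α i ≤ C})
    (f fbar : (Fin n → ℝ) → ℝ)
    (hf : ∀ α, f α = (1/2) * (α ⬝ᵥ Q.mulVec α) - ∑ i, α i)
    (hfbar : ∀ α, fbar α = (1/2) * (α ⬝ᵥ Qbar.mulVec α) - ∑ i, α i)
    (αstar : Fin n → ℝ) (hαstar : αstar ∈ box)
    (hmin : ∀ β ∈ box, f αstar ≤ f β)
    (αbar : Fin n → ℝ) (hαbar : αbar ∈ box)
    (hminbar : ∀ β ∈ box, fbar αbar ≤ fbar β)
    (Dset : ℝ)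
    (hDset : Dset = ∑ i, ∑ j,
      (if (0 < αstar i ∨ 0 < αbar i) ∧ (0 < αstar j ∨ 0 < αbar j) ∧ π i ≠ π j
        then |Q i j| else 0)) :
    (0 ≤ f αbar - f αstar ∧ f αbar - f αstar ≤ (1/2) * C^2 * Dset) ∧
    (∀ σ : ℝ, 0 < σ →
      (∀ x : Fin n → ℝ, σ * (∑ i, (x i)^2) ≤ x ⬝ᵥ Q.mulVec x) →
      ∑ i, (αstar i - αbar i)^2 ≤ C^2 * Dset / σ) := by
  -- basic facts about the box
  have hs : ∀ i, 0 ≤ αstar i ∧ αstar i ≤ C := by rw [hbox] at hαstar; exact hαstar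
  have hb : ∀ i, 0 ≤ αbar i ∧ αbar i ≤ C := by rw [hbox] at hαbar; exact hαbar
  -- bilinear form as double sum
  set S : (Fin n → ℝ) → (Fin n → ℝ) → ℝ := fun x y => ∑ i, ∑ j, Q i j * x i * y j with hS
  have hB : ∀ x y : Fin n → ℝ, x ⬝ᵥ Q.mulVec y = S x y := by
    intro x y
    simp only [dotProduct, mulVec, hS, Finset.mul_sum]
    exact Finset.sum_congr rfl fun i _ => Finset.sum_congr rfl fun j _ => by ring
  have hsym : ∀ x y : Fin n → ℝ, S x y = S y x := by
    intro x y
    show (∑ i, ∑ j, Q i j * x i * y j) = ∑ i, ∑ j, Q i j * y i * x j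
    rw [Finset.sum_comm]
    exact Finset.sum_congr rfl fun i _ => Finset.sum_congr rfl fun j _ => by
      rw [hQ.apply i j]; ring
  have hfS : ∀ x, f x = (1/2) * S x x - ∑ i, x i := by
    intro x; rw [hf, hB]
  -- Part 1, lower bound
  have hlow : 0 ≤ f αbar - f αstar := sub_nonneg.mpr (hmin αbar hαbar)
  -- difference f - fbar as sum over the off-block entries
  have hdiff : ∀ x : Fin n → ℝ, f x - fbar x
      = (1/2) * ∑ i, ∑ j, (if π i = π j then 0 else Q i j) * x i * x j := by
    intro x
    rw [hf, hfbar, hB]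
    have h1 : x ⬝ᵥ Qbar.mulVec x = ∑ i, ∑ j, Qbar i j * x i * x j := by
      simp only [dotProduct, mulVec, Finset.mul_sum]
      exact Finset.sum_congr rfl fun i _ => Finset.sum_congr rfl fun j _ => by ring
    have h2 : ∀ i j : Fin n, (if π i = π j then 0 else Q i j) * x i * x j
        = Q i j * x i * x j - Qbar i j * x i * x j := by
      intro i j; rw [hQbar]; by_cases h : π i = π j <;> simp [h]
    have h3 : S x x = ∑ i, ∑ j, Q i j * x i * x j := rfl
    rw [h1, h3]
    simp only [h2, Finset.sum_sub_distrib]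
    ring
  -- Part 1, upper bound
  have hup : f αbar - f αstar ≤ (1/2) * C^2 * Dset := by
    have h1 : fbar αbar ≤ fbar αstar := hminbar αstar hαstar
    have h2 : f αbar - f αstar ≤ (f αbar - fbar αbar) - (f αstar - fbar αstar) := by
      linarith
    have h3 : (f αbar - fbar αbar) - (f αstar - fbar αstar)
        = (1/2) * ∑ i, ∑ j, (if π i = π j then 0 else Q i j)
            * (αbar i * αbar j - αstar i * αstar j) := by
      rw [hdiff, hdiff]
      rw [← mul_sub, ]
      congr 1
      rw [← Finset.sum_sub_distrib]
      refine Finset.sum_congr rfl fun i _ => ?_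
      rw [← Finset.sum_sub_distrib]
      exact Finset.sum_congr rfl fun j _ => by ring
    have h4 : ∑ i, ∑ j, (if π i = π j then 0 else Q i j)
            * (αbar i * αbar j - αstar i * αstar j)
        ≤ ∑ i, ∑ j, (if (0 < αstar i ∨ 0 < αbar i) ∧ (0 < αstar j ∨ 0 < αbar j) ∧ π i ≠ π j
            then C^2 * |Q i j| else 0) := by
      refine Finset.sum_le_sum fun i _ => Finset.sum_le_sum fun j _ => ?_
      by_cases hπ : π i = π j
      · simp [hπ]
      · by_cases hi : 0 < αstar i ∨ 0 < αbar i
        · by_cases hj : 0 < αstar j ∨ 0 < αbar j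
          · simp only [hπ, if_false, hi, hj, ne_eq, not_false_eq_true, and_self, if_true]
            have hij : |αbar i * αbar j - αstar i * αstar j| ≤ C^2 := by
              have := hs i; have := hs j; have := hb i; have := hb j
              rw [abs_le]; constructor <;> nlinarith
            calc Q i j * (αbar i * αbar j - αstar i * αstar j)
                ≤ |Q i j * (αbar i * αbar j - αstar i * αstar j)| := le_abs_self _
              _ = |Q i j| * |αbar i * αbar j - αstar i * αstar j| := abs_mul _ _
              _ ≤ |Q i j| * C^2 := by
                  exact mul_le_mul_of_nonneg_left hij (abs_nonneg _)
              _ = C^2 * |Q i j| := mul_comm _ _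
          · have hj0 : αstar j = 0 := le_antisymm (by push_neg at hj; exact hj.1) (hs j).1
            have hj1 : αbar j = 0 := le_antisymm (by push_neg at hj; exact hj.2) (hb j).1
            simp [hj0, hj1, hj]
        · have hi0 : αstar i = 0 := le_antisymm (by push_neg at hi; exact hi.1) (hs i).1
          have hi1 : αbar i = 0 := le_antisymm (by push_neg at hi; exact hi.2) (hb i).1
          simp [hi0, hi1, hi]
    have h5 : ∑ i, ∑ j, (if (0 < αstar i ∨ 0 < αbar i) ∧ (0 < αstar j ∨ 0 < αbar j) ∧ π i ≠ π j
            then C^2 * |Q i j| else 0) = C^2 * Dset := by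
      rw [hDset, Finset.mul_sum]
      refine Finset.sum_congr rfl fun i _ => ?_
      rw [Finset.mul_sum]
      refine Finset.sum_congr rfl fun j _ => ?_
      by_cases h : (0 < αstar i ∨ 0 < αbar i) ∧ (0 < αstar j ∨ 0 < αbar j) ∧ π i ≠ π j <;>
        simp [h]
    have := h4
    rw [h5] at this
    calc f αbar - f αstar ≤ _ := h2
      _ = _ := h3
      _ ≤ (1/2) * (C^2 * Dset) := by linarith
      _ = (1/2) * C^2 * Dset := by ring
  refine ⟨⟨hlow, hup⟩, ?_⟩
  -- Part 2
  intro σ hσ hPD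
  set d : Fin n → ℝ := fun i => αbar i - αstar i with hd
  -- expansion of S on combinations
  have hSexp : ∀ t : ℝ, S (fun i => αstar i + t * d i) (fun i => αstar i + t * d i)
      = S αstar αstar + 2 * t * S d αstar + t^2 * S d d := by
    intro t
    simp only [hS]
    have key : ∀ i j : Fin n, Q i j * (αstar i + t * d i) * (αstar j + t * d j)
        = Q i j * αstar i * αstar j + t * (Q i j * d i * αstar j)
          + t * (Q i j * αstar i * d j) + t^2 * (Q i j * d i * d j) := by
      intro i j; ring
    simp only [key, Finset.sum_add_distrib, ← Finset.mul_sum]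
    have : (∑ i, ∑ j, Q i j * αstar i * d j) = ∑ i, ∑ j, Q i j * d i * αstar j := by
      have := hsym αstar d
      simpa [hS] using this
    rw [this]; ring
  have hfexp : ∀ t : ℝ, f (fun i => αstar i + t * d i)
      = f αstar + t * (S d αstar - ∑ i, d i) + t^2 * (S d d / 2) := by
    intro t
    rw [hfS, hfS, hSexp]
    have : ∑ i, (αstar i + t * d i) = (∑ i, αstar i) + t * ∑ i, d i := by
      rw [Finset.sum_add_distrib, ← Finset.mul_sum]
    rw [this]; ring
  -- membership of the segment in the box
  have hseg : ∀ t : ℝ, 0 ≤ t → t ≤ 1 → (fun i => αstar i + t * d i) ∈ box := by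
    intro t ht0 ht1
    rw [hbox]
    intro i
    have h1 := hs i; have h2 := hb i
    constructor <;> simp only [hd] <;> nlinarith [h1.1, h1.2, h2.1, h2.2]
  set g : ℝ := S d αstar - ∑ i, d i with hg
  have hq : ∀ t : ℝ, 0 ≤ t → t ≤ 1 → 0 ≤ t * g + t^2 * (S d d / 2) := by
    intro t ht0 ht1
    have := hmin _ (hseg t ht0 ht1)
    rw [hfexp t] at this
    linarith
  have hSdd0 : 0 ≤ S d d := by
    have h1 := hPD d
    rw [hB] at h1
    have h2 : 0 ≤ σ * ∑ i, (d i)^2 :=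
      mul_nonneg hσ.le (Finset.sum_nonneg fun i _ => sq_nonneg _)
    linarith
  have hg0 : 0 ≤ g := by
    by_contra hgc
    push_neg at hgc
    rcases eq_or_lt_of_le hSdd0 with hz | hz
    · have := hq 1 zero_le_one le_rfl
      rw [← hz] at this
      nlinarith
    · set t := min 1 (-g / S d d) with htdef
      have ht0 : 0 < t := lt_min one_pos (div_pos (neg_pos.mpr hgc) hz)
      have ht1 : t ≤ 1 := min_le_left _ _
      have ht2 : t ≤ -g / S d d := min_le_right _ _
      have ht3 : t * S d d ≤ -g := by
        have h := mul_le_mul_of_nonneg_right ht2 hz.le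
        rwa [div_mul_cancel₀ _ (ne_of_gt hz)] at h
      have := hq t ht0.le ht1
      nlinarith
  -- conclude
  have hone : (fun i => αstar i + 1 * d i) = αbar := by
    funext i; simp [hd]
  have hΔ : f αbar - f αstar = g + S d d / 2 := by
    have := hfexp 1
    rw [hone] at this
    linarith
  have hlb : σ * ∑ i, (d i)^2 ≤ S d d := by
    have := hPD d; rwa [hB] at this
  have hfin : σ * ∑ i, (d i)^2 ≤ C^2 * Dset := by
    nlinarith [hup, hΔ, hg0, hlb]
  have hsum : ∑ i, (αstar i - αbar i)^2 = ∑ i, (d i)^2 := by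
    refine Finset.sum_congr rfl fun i _ => ?_
    simp only [hd]; ring
  rw [hsum, le_div_iff₀ hσ]
  linarith
end
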